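/- Let Φ be an ortho-additive range-contractive map on a von Neumann algebra M. Then for every projection P ∈ M and every operator A ∈ M, Φ(PA) = P·Φ(A). -/

import Mathlib

noncomputable section

namespace Stmt9

variable {H : Type*} [NormedAddCommGroup H] [InnerProductSpace ℂ H] [CompleteSpace H]

/-- The range projection of a bounded operator: the orthogonal projection of `H` onto the
closure of the range of `A` (equivalently, the smallest projection `P` with `P * A = A`). -/
noncomputable def rangeProjection (A : H →L[ℂ] H) : H →L[ℂ] H :=
  haveI : CompleteSpace ((LinearMap.range (A : H →ₗ[ℂ] H)).topologicalClosure : Submodule ℂ H) :=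
    (Submodule.isClosed_topologicalClosure _).completeSpace_coe
  (LinearMap.range (A : H →ₗ[ℂ] H)).topologicalClosure.subtypeL ∘L
    Submodule.orthogonalProjectionOnto (LinearMap.range (A : H →ₗ[ℂ] H)).topologicalClosure

/-- The order on projections: `P ≤ Q` iff `P * Q = P`. -/
def projLE (P Q : H →L[ℂ] H) : Prop := P * Q = P

/-- `Φ` is an ortho-additive map on `M`: it is additive on pairs of orthogonal elements. -/
def OrthoAdditive (M : VonNeumannAlgebra H) (Φ : (H →L[ℂ] H) → (H →L[ℂ] H)) : Prop :=
  ∀ A ∈ M, ∀ B ∈ M, star A * B = 0 → Φ (A + B) = Φ A + Φ B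

/-- `Φ` is a range-contractive map on `M`: `R(Φ A) ≤ R(A)` for all `A ∈ M`. -/
def RangeContractive (M : VonNeumannAlgebra H) (Φ : (H →L[ℂ] H) → (H →L[ℂ] H)) : Prop :=
  ∀ A ∈ M, projLE (rangeProjection (Φ A)) (rangeProjection A)

lemma rangeProjection_mul_self (A : H →L[ℂ] H) : rangeProjection A * A = A := by
  haveI : CompleteSpace ((LinearMap.range (A : H →ₗ[ℂ] H)).topologicalClosure : Submodule ℂ H) :=
    (Submodule.isClosed_topologicalClosure _).completeSpace_coe
  ext v
  have h : A v ∈ (LinearMap.range (A : H →ₗ[ℂ] H)).topologicalClosure :=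
    Submodule.le_topologicalClosure _ ⟨v, rfl⟩
  exact Submodule.starProjection_eq_self_iff.mpr h

lemma rangeProjection_isSelfAdjoint (A : H →L[ℂ] H) :
    star (rangeProjection A) = rangeProjection A := by
  haveI : CompleteSpace ((LinearMap.range (A : H →ₗ[ℂ] H)).topologicalClosure : Submodule ℂ H) :=
    (Submodule.isClosed_topologicalClosure _).completeSpace_coe
  exact isSelfAdjoint_starProjection _

lemma mul_rangeProjection_of_fix (Q A : H →L[ℂ] H) (h : Q * A = A) :
    Q * rangeProjection A = rangeProjection A := by
  haveI : CompleteSpace ((LinearMap.range (A : H →ₗ[ℂ] H)).topologicalClosure : Submodule ℂ H) :=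
    (Submodule.isClosed_topologicalClosure _).completeSpace_coe
  ext v
  have hmem : rangeProjection A v ∈ (LinearMap.range (A : H →ₗ[ℂ] H)).topologicalClosure :=
    (Submodule.orthogonalProjectionOnto (LinearMap.range (A : H →ₗ[ℂ] H)).topologicalClosure v).2
  have hcl : IsClosed {y : H | Q y = y} := isClosed_eq Q.continuous continuous_id
  have hsub : ((LinearMap.range (A : H →ₗ[ℂ] H) : Submodule ℂ H) : Set H) ⊆ {y | Q y = y} := by
    rintro _ ⟨x, rfl⟩
    have := congrArg (fun T : H →L[ℂ] H => T x) h
    simpa using this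
  have hfix : Q (rangeProjection A v) = rangeProjection A v := by
    have : rangeProjection A v ∈ closure ((LinearMap.range (A : H →ₗ[ℂ] H) : Submodule ℂ H) : Set H) := by
      rw [← Submodule.topologicalClosure_coe]; exact hmem
    exact closure_minimal hsub hcl this
  simpa using hfix

/-- If `Φ` is an ortho-additive range-contractive map on a von Neumann
algebra `M`, then `Φ (P * A) = P * Φ A` for every projection `P ∈ M` and every `A ∈ M`. -/
theorem stmt9 (M : VonNeumannAlgebra H)
    (Φ : (H →L[ℂ] H) → (H →L[ℂ] H))
    (hmaps : ∀ A ∈ M, Φ A ∈ M)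
    (hadd : OrthoAdditive M Φ)
    (hrc : RangeContractive M Φ) :
    ∀ P : H →L[ℂ] H, P ∈ M → P * P = P → star P = P →
      ∀ A ∈ M, Φ (P * A) = P * Φ A := by
  intro P hP hP2 hPs A hA
  -- Key: if Q fixes X (i.e. Q * X = X) and X ∈ M, then Q fixes Φ X.
  have key : ∀ Q X : H →L[ℂ] H, X ∈ M → Q * X = X → Q * Φ X = Φ X := by
    intro Q X hX hQX
    set r1 := rangeProjection (Φ X)
    set r2 := rangeProjection X
    have h1 : r1 * r2 = r1 := hrc X hX
    have h2 : r2 * r1 = r1 := by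
      have := congrArg star h1
      rwa [star_mul, rangeProjection_isSelfAdjoint, rangeProjection_isSelfAdjoint] at this
    have h3 : Q * r2 = r2 := mul_rangeProjection_of_fix Q X hQX
    have h4 : r1 * Φ X = Φ X := rangeProjection_mul_self (Φ X)
    have h5 : Φ X = r2 * (r1 * Φ X) := by rw [← mul_assoc, h2, h4]
    calc Q * Φ X = Q * (r2 * (r1 * Φ X)) := by rw [← h5]
      _ = (Q * r2) * (r1 * Φ X) := by rw [mul_assoc]
      _ = r2 * (r1 * Φ X) := by rw [h3]
      _ = Φ X := by rw [← h5]
  have hPA : P * A ∈ M := mul_mem hP hA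
  have hQ : (1 - P : H →L[ℂ] H) ∈ M := sub_mem (one_mem M) hP
  have hQA : (1 - P) * A ∈ M := mul_mem hQ hA
  have horth : star (P * A) * ((1 - P) * A) = 0 := by
    rw [star_mul, hPs, mul_assoc, ← mul_assoc P, mul_sub, mul_one, hP2, sub_self, zero_mul,
      mul_zero]
  have hsum : Φ A = Φ (P * A) + Φ ((1 - P) * A) := by
    have := hadd _ hPA _ hQA horth
    rw [← this]
    congr 1
    rw [← add_mul]
    simp
  have h1 : P * Φ (P * A) = Φ (P * A) := by
    apply key
    · exact hPA
    · rw [← mul_assoc, hP2]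
  have h2 : (1 - P) * Φ ((1 - P) * A) = Φ ((1 - P) * A) := by
    apply key
    · exact hQA
    · rw [← mul_assoc]
      congr 1
      simp [sub_mul, mul_sub, hP2]
  have h3 : P * Φ ((1 - P) * A) = 0 := by
    have := congrArg (fun X => P * X) h2
    simp only [← mul_assoc, mul_sub, mul_one, hP2, sub_self, zero_mul] at this
    exact this.symm
  rw [hsum, mul_add, h1, h3, add_zero]

end Stmt9
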